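/- Let T > 0, s ∈ [0,T], and let V(t,x) be as in Example 5.2: V(t,x) = arctan x for x ≤ 1 and V(t,x) = [x·e^{m(x)(t−T)}/(x−1+e^{m(x)(t−T)})]·arctan x for x > 1, with m(x) = x³/((1+x²)² arctan x). Then at x̂ = 1: the left x-derivative of V(s,·) at 1 is 1/2, the right x-derivative at 1 is 1/2 + (π/4)(1 − e^{(T−s)/π}) ≤ 1/2, the first-order superjet D_x^{1,+}V(s,1) = [1/2 + (π/4)(1 − e^{(T−s)/π}), 1/2], and the first-order subjet D_x^{1,−}V(s,1) is empty whenever s < T. -/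

import Mathlib

open Real Asymptotics Filter


/-- `m(x) = x³/((1+x²)² arctan x)`. -/
noncomputable def mcoef (x : ℝ) : ℝ := x ^ 3 / ((1 + x ^ 2) ^ 2 * Real.arctan x)

/-- The piecewise value function of Example 5.2. -/
noncomputable def Vex (T t x : ℝ) : ℝ :=
  if x ≤ 1 then Real.arctan x
  else (x * Real.exp (mcoef x * (t - T)) / (x - 1 + Real.exp (mcoef x * (t - T))))
    * Real.arctan x

/-- First-order superjet of `v(s,·)` at `x0`. -/
def Dx1plus (v : ℝ → ℝ → ℝ) (s x0 : ℝ) : Set ℝ :=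
  {p | ∀ ε > 0, ∃ δ > 0, ∀ x, |x - x0| < δ →
    v s x ≤ v s x0 + p * (x - x0) + ε * |x - x0|}

/-- First-order subjet of `v(s,·)` at `x0`. -/
def Dx1minus (v : ℝ → ℝ → ℝ) (s x0 : ℝ) : Set ℝ :=
  {p | ∀ ε > 0, ∃ δ > 0, ∀ x, |x - x0| < δ →
    v s x ≥ v s x0 + p * (x - x0) - ε * |x - x0|}


private lemma deriv_eps {v : ℝ → ℝ} {d : ℝ} {S : Set ℝ}
    (h : HasDerivWithinAt v d S 1) {ε : ℝ} (hε : 0 < ε) :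
    ∃ δ > 0, ∀ x ∈ S, |x - 1| < δ → |v x - v 1 - d * (x - 1)| ≤ ε * |x - 1| := by
  have h2 := hasDerivWithinAt_iff_isLittleO.mp h
  rw [isLittleO_iff] at h2
  have h3 := h2 hε
  rw [eventually_nhdsWithin_iff, Metric.eventually_nhds_iff] at h3
  obtain ⟨δ, hδ, hb⟩ := h3
  refine ⟨δ, hδ, fun x hx hxd => ?_⟩
  have := hb (by rwa [Real.dist_eq]) hx
  simpa [Real.norm_eq_abs, smul_eq_mul, mul_comm] using this

private lemma right_le {v : ℝ → ℝ} {dr p : ℝ}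
    (hr : HasDerivWithinAt v dr (Set.Ici 1) 1)
    (hp : ∀ ε > 0, ∃ δ > 0, ∀ x, |x - 1| < δ → v x ≤ v 1 + p * (x - 1) + ε * |x - 1|) :
    dr ≤ p := by
  by_contra hc
  push_neg at hc
  set ε := (dr - p) / 3 with hεdef
  have hε : 0 < ε := by simp only [hεdef]; linarith
  obtain ⟨δ₁, hδ₁, H1⟩ := hp ε hε
  obtain ⟨δ₂, hδ₂, H2⟩ := deriv_eps hr hε
  have hmin : 0 < min δ₁ δ₂ := lt_min hδ₁ hδ₂
  set t := min δ₁ δ₂ / 2 with htdef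
  have ht : 0 < t := by positivity
  have htm : t < min δ₁ δ₂ := half_lt_self hmin
  have habs : |(1 + t) - 1| = t := by rw [show (1 + t) - 1 = t by ring, abs_of_pos ht]
  have h1 := H1 (1 + t) (by rw [habs]; exact lt_of_lt_of_le htm (min_le_left _ _))
  have h2 := H2 (1 + t) (by simp [Set.mem_Ici]; linarith)
    (by rw [habs]; exact lt_of_lt_of_le htm (min_le_right _ _))
  rw [habs, show (1 + t) - 1 = t by ring] at h1 h2
  rw [abs_le] at h2
  nlinarith [h2.1, h2.2]

private lemma left_le {v : ℝ → ℝ} {dl p : ℝ}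
    (hl : HasDerivWithinAt v dl (Set.Iic 1) 1)
    (hp : ∀ ε > 0, ∃ δ > 0, ∀ x, |x - 1| < δ → v x ≤ v 1 + p * (x - 1) + ε * |x - 1|) :
    p ≤ dl := by
  by_contra hc
  push_neg at hc
  set ε := (p - dl) / 3 with hεdef
  have hε : 0 < ε := by simp only [hεdef]; linarith
  obtain ⟨δ₁, hδ₁, H1⟩ := hp ε hε
  obtain ⟨δ₂, hδ₂, H2⟩ := deriv_eps hl hε
  have hmin : 0 < min δ₁ δ₂ := lt_min hδ₁ hδ₂
  set t := min δ₁ δ₂ / 2 with htdef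
  have ht : 0 < t := by positivity
  have htm : t < min δ₁ δ₂ := half_lt_self hmin
  have habs : |(1 - t) - 1| = t := by
    rw [show (1 - t) - 1 = -t by ring, abs_neg, abs_of_pos ht]
  have h1 := H1 (1 - t) (by rw [habs]; exact lt_of_lt_of_le htm (min_le_left _ _))
  have h2 := H2 (1 - t) (by simp [Set.mem_Iic]; linarith)
    (by rw [habs]; exact lt_of_lt_of_le htm (min_le_right _ _))
  rw [habs, show (1 - t) - 1 = -t by ring] at h1 h2
  rw [abs_le] at h2
  nlinarith [h2.1, h2.2]

private lemma jets_plus {v : ℝ → ℝ} {dl dr : ℝ}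
    (hl : HasDerivWithinAt v dl (Set.Iic 1) 1)
    (hr : HasDerivWithinAt v dr (Set.Ici 1) 1) (hrl : dr ≤ dl) :
    {p : ℝ | ∀ ε > 0, ∃ δ > 0, ∀ x, |x - 1| < δ →
      v x ≤ v 1 + p * (x - 1) + ε * |x - 1|} = Set.Icc dr dl := by
  ext p
  simp only [Set.mem_setOf_eq, Set.mem_Icc]
  constructor
  · intro hp
    exact ⟨right_le hr hp, left_le hl hp⟩
  · rintro ⟨h1p, h2p⟩ ε hε
    obtain ⟨δ₁, hδ₁, H1⟩ := deriv_eps hl hε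
    obtain ⟨δ₂, hδ₂, H2⟩ := deriv_eps hr hε
    refine ⟨min δ₁ δ₂, lt_min hδ₁ hδ₂, fun x hx => ?_⟩
    rcases le_total x 1 with h | h
    · have := H1 x h (lt_of_lt_of_le hx (min_le_left _ _))
      rw [abs_le] at this
      have hmul : dl * (x - 1) ≤ p * (x - 1) :=
        mul_le_mul_of_nonpos_right h2p (by linarith)
      linarith [this.2]
    · have := H2 x h (lt_of_lt_of_le hx (min_le_right _ _))
      rw [abs_le] at this
      have hmul : dr * (x - 1) ≤ p * (x - 1) :=
        mul_le_mul_of_nonneg_right h1p (by linarith)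
      linarith [this.2]

private lemma jets_minus {v : ℝ → ℝ} {dl dr : ℝ}
    (hl : HasDerivWithinAt v dl (Set.Iic 1) 1)
    (hr : HasDerivWithinAt v dr (Set.Ici 1) 1) (hrl : dr < dl) :
    {p : ℝ | ∀ ε > 0, ∃ δ > 0, ∀ x, |x - 1| < δ →
      v x ≥ v 1 + p * (x - 1) - ε * |x - 1|} = ∅ := by
  ext p
  simp only [Set.mem_setOf_eq, Set.mem_empty_iff_false, iff_false]
  intro hp
  have hp' : ∀ ε > 0, ∃ δ > 0, ∀ x, |x - 1| < δ →
      (fun y => -v y) x ≤ (fun y => -v y) 1 + (-p) * (x - 1) + ε * |x - 1| := by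
    intro ε hε
    obtain ⟨δ, hδ, H⟩ := hp ε hε
    exact ⟨δ, hδ, fun x hx => by have := H x hx; simp only; linarith⟩
  have h1 := right_le hr.neg hp'
  have h2 := left_le hl.neg hp'
  linarith

theorem Vex_jets_at_one (T s : ℝ) (hT : 0 < T) (hs : s ∈ Set.Icc 0 T) :
    HasDerivWithinAt (fun x => Vex T s x) (1 / 2) (Set.Iic 1) 1 ∧
    HasDerivWithinAt (fun x => Vex T s x)
      (1 / 2 + Real.pi / 4 * (1 - Real.exp ((T - s) / Real.pi))) (Set.Ici 1) 1 ∧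
    (1 / 2 + Real.pi / 4 * (1 - Real.exp ((T - s) / Real.pi)) ≤ 1 / 2) ∧
    Dx1plus (Vex T) s 1
      = Set.Icc (1 / 2 + Real.pi / 4 * (1 - Real.exp ((T - s) / Real.pi))) (1 / 2) ∧
    (s < T → Dx1minus (Vex T) s 1 = ∅) := by
  obtain ⟨hs0, hsT⟩ := hs
  -- Left derivative
  have harct : HasDerivWithinAt (fun x => Real.arctan x) (1 / 2) (Set.Iic 1) 1 := by
    have h := (Real.hasDerivAt_arctan 1).hasDerivWithinAt (s := Set.Iic 1)
    norm_num at h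
    exact h
  have h1 : HasDerivWithinAt (fun x => Vex T s x) (1 / 2) (Set.Iic 1) 1 := by
    refine harct.congr (fun x hx => ?_) ?_
    · simp only [Vex]; rw [if_pos (Set.mem_Iic.mp hx)]
    · simp only [Vex]; rw [if_pos (le_refl (1:ℝ))]
  -- Right derivative
  have hm1 : mcoef 1 = 1 / Real.pi := by
    simp only [mcoef, Real.arctan_one]
    norm_num
  have hmd : DifferentiableAt ℝ mcoef 1 := by
    have : mcoef = fun x : ℝ => x ^ 3 / ((1 + x ^ 2) ^ 2 * Real.arctan x) := rfl
    rw [this]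
    apply DifferentiableAt.div
    · exact differentiableAt_pow 3
    · exact (((differentiableAt_const (1:ℝ)).add (differentiableAt_pow 2)).pow 2).mul
        (Real.differentiable_arctan 1)
    · simp [Real.arctan_one]
  obtain ⟨M, hM⟩ : ∃ M, HasDerivAt mcoef M 1 := ⟨_, hmd.hasDerivAt⟩
  set E := Real.exp (mcoef 1 * (s - T)) with hEdef
  have hEpos : 0 < E := Real.exp_pos _
  have hE : HasDerivAt (fun x => Real.exp (mcoef x * (s - T))) (E * (M * (s - T))) 1 :=
    (hM.mul_const (s - T)).exp
  have hN : HasDerivAt (fun x => x * Real.exp (mcoef x * (s - T)))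
      (1 * E + 1 * (E * (M * (s - T)))) 1 := by
    simpa [Pi.mul_def] using (hasDerivAt_id 1).mul hE
  have hD : HasDerivAt (fun x => x - 1 + Real.exp (mcoef x * (s - T)))
      (1 + E * (M * (s - T))) 1 := by
    simpa [Pi.add_def] using ((hasDerivAt_id 1).sub_const 1).add hE
  have hDne : (1 : ℝ) - 1 + E ≠ 0 := by
    rw [show (1:ℝ) - 1 + E = E by ring]
    exact ne_of_gt hEpos
  have hf := hN.div hD hDne
  have hg := hf.mul (Real.hasDerivAt_arctan 1)
  have hexpinv : Real.exp ((T - s) / Real.pi) = E⁻¹ := by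
    rw [hEdef, ← Real.exp_neg,
      show -(mcoef 1 * (s - T)) = (T - s) / Real.pi by rw [hm1]; ring]
  have hg' : HasDerivAt
      (fun x => (x * Real.exp (mcoef x * (s - T)) / (x - 1 + Real.exp (mcoef x * (s - T))))
        * Real.arctan x)
      (1 / 2 + Real.pi / 4 * (1 - Real.exp ((T - s) / Real.pi))) 1 := by
    refine hg.congr_deriv ?_
    simp only [Pi.div_apply, ← hEdef]
    rw [hexpinv, Real.arctan_one]
    rw [show (1:ℝ) - 1 + E = E by ring]
    field_simp
    ring
  have hgeq1 : (fun x => (x * Real.exp (mcoef x * (s - T))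
      / (x - 1 + Real.exp (mcoef x * (s - T)))) * Real.arctan x) 1 = Real.arctan 1 := by
    simp only
    rw [one_mul, show (1:ℝ) - 1 + E = E by ring, div_self (ne_of_gt hEpos), one_mul]
  have h2 : HasDerivWithinAt (fun x => Vex T s x)
      (1 / 2 + Real.pi / 4 * (1 - Real.exp ((T - s) / Real.pi))) (Set.Ici 1) 1 := by
    refine hg'.hasDerivWithinAt.congr (fun x hx => ?_) ?_
    · rcases eq_or_lt_of_le (Set.mem_Ici.mp hx) with h | h
      · rw [← h]
        simp only [Vex, if_pos (le_refl (1:ℝ))]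
        exact hgeq1.symm
      · simp only [Vex, if_neg (not_le.mpr h)]
    · simp only [Vex, if_pos (le_refl (1:ℝ))]
      exact hgeq1.symm
  -- Inequality
  have hexp1 : 1 ≤ Real.exp ((T - s) / Real.pi) :=
    Real.one_le_exp (div_nonneg (by linarith) Real.pi_pos.le)
  have h3 : 1 / 2 + Real.pi / 4 * (1 - Real.exp ((T - s) / Real.pi)) ≤ 1 / 2 := by
    nlinarith [Real.pi_pos]
  refine ⟨h1, h2, h3, ?_, ?_⟩
  · exact jets_plus h1 h2 h3
  · intro hsT'
    have hexp1' : 1 < Real.exp ((T - s) / Real.pi) := by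
      rw [Real.one_lt_exp_iff]
      exact div_pos (by linarith) Real.pi_pos
    have h3' : 1 / 2 + Real.pi / 4 * (1 - Real.exp ((T - s) / Real.pi)) < 1 / 2 := by
      nlinarith [Real.pi_pos]
    exact jets_minus h1 h2 h3'
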